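/- For odd q and even n ≥ 2, the counts satisfy IM_n(q) = 2·SRIM⁻_n(q) − SRIM⁻_{n/2}(q), where IM_n(q) = (1/n) ∑_{d|n} μ(d)(q^{n/d} − 1) and SRIM⁻_n(q) = (1/(2n)) ∑_{d | n, d odd} μ(d)(q^{n/d} − 1); and for odd n, IM_n(q) = 2·SRIM⁻_n(q). -/

import Mathlib

open ArithmeticFunction Finset

lemma odd_sum_eq (q n : ℕ) (hno : Odd n) :
    n.divisors.filter (fun d => Odd d) = n.divisors := by
  apply Finset.filter_true_of_mem
  intro d hd
  have hdvd := (Nat.mem_divisors.mp hd).1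
  rcases Nat.even_or_odd d with he | ho
  · exfalso
    have h2 : 2 ∣ n := dvd_trans he.two_dvd hdvd
    exact (Nat.not_even_iff_odd.mpr hno) ((even_iff_two_dvd).mpr h2)
  · exact ho

/-- For odd prime power `q`: for even `n`, `IM_n(q) = 2·SRIM⁻_n(q) − SRIM⁻_{n/2}(q)`,
and for odd `n`, `IM_n(q) = 2·SRIM⁻_n(q)`, where
`IM_n(q) = (1/n) ∑_{d ∣ n} μ(d)(q^{n/d} − 1)` and
`SRIM⁻_n(q) = (1/(2n)) ∑_{d ∣ n, d odd} μ(d)(q^{n/d} − 1)`. -/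
theorem im_srim_moebius_identity (q n : ℕ) (hq : Odd q) (hq' : IsPrimePow q)
    (hn : 1 ≤ n) :
    (Even n →
      (1 / (n : ℚ)) * ∑ d ∈ n.divisors,
          ((ArithmeticFunction.moebius d : ℤ) : ℚ) * ((q : ℚ) ^ (n / d) - 1)
        = 2 * ((1 / (2 * (n : ℚ))) * ∑ d ∈ n.divisors.filter (fun d => Odd d),
            ((ArithmeticFunction.moebius d : ℤ) : ℚ) * ((q : ℚ) ^ (n / d) - 1))
          - (1 / (2 * ((n / 2 : ℕ) : ℚ))) *
              ∑ d ∈ (n / 2).divisors.filter (fun d => Odd d),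
                ((ArithmeticFunction.moebius d : ℤ) : ℚ) * ((q : ℚ) ^ ((n / 2) / d) - 1)) ∧
    (Odd n →
      (1 / (n : ℚ)) * ∑ d ∈ n.divisors,
          ((ArithmeticFunction.moebius d : ℤ) : ℚ) * ((q : ℚ) ^ (n / d) - 1)
        = 2 * ((1 / (2 * (n : ℚ))) * ∑ d ∈ n.divisors.filter (fun d => Odd d),
            ((ArithmeticFunction.moebius d : ℤ) : ℚ) * ((q : ℚ) ^ (n / d) - 1))) := by
  constructor
  · intro hne
    set m := n / 2 with hmdef
    have hmn : n = 2 * m := (Nat.two_mul_div_two_of_even hne).symm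
    have hm1 : 1 ≤ m := by omega
    have hm0 : (m : ℚ) ≠ 0 := by positivity
    have hncast : (n : ℚ) = 2 * m := by rw [hmn]; push_cast; ring
    -- split the full sum
    have hsplit := Finset.sum_filter_add_sum_filter_not n.divisors (fun d => Odd d)
      (fun d => ((moebius d : ℤ) : ℚ) * ((q : ℚ) ^ (n / d) - 1))
    -- reindex the even part
    have key : ∑ d ∈ n.divisors.filter (fun d => ¬ Odd d),
        ((moebius d : ℤ) : ℚ) * ((q : ℚ) ^ (n / d) - 1)
        = ∑ e ∈ m.divisors, ((moebius (2 * e) : ℤ) : ℚ) * ((q : ℚ) ^ (m / e) - 1) := by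
      apply Finset.sum_nbij' (i := fun d => d / 2) (j := fun e => 2 * e)
      · intro d hd
        simp only [Finset.mem_filter, Nat.mem_divisors] at hd
        obtain ⟨⟨hdvd, hn0⟩, hde⟩ := hd
        rw [Nat.not_odd_iff_even] at hde
        obtain ⟨e, he⟩ := hde
        have hd2 : d = 2 * e := by omega
        subst hd2
        rw [Nat.mul_div_cancel_left e (by norm_num)]
        refine Nat.mem_divisors.mpr ⟨?_, by omega⟩
        rw [hmn] at hdvd
        exact (mul_dvd_mul_iff_left (two_ne_zero)).mp hdvd
      · intro e he
        simp only [Nat.mem_divisors] at he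
        refine Finset.mem_filter.mpr ⟨Nat.mem_divisors.mpr ⟨by rw [hmn]; exact mul_dvd_mul_left 2 he.1, by omega⟩, ?_⟩
        simp [Nat.not_odd_iff_even, Nat.even_mul]
      · intro d hd
        simp only [Finset.mem_filter, Nat.not_odd_iff_even] at hd
        obtain ⟨e, he⟩ := hd.2
        omega
      · intro e he
        rw [Nat.mul_div_cancel_left e (by norm_num)]
      · intro d hd
        simp only [Finset.mem_filter, Nat.mem_divisors, Nat.not_odd_iff_even] at hd
        obtain ⟨⟨hdvd, hn0⟩, hde⟩ := hd
        obtain ⟨e, hee⟩ := hde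
        have hd2 : d = 2 * (d / 2) := by omega
        rw [← hd2]
        congr 2
        rw [hmn]
        conv_lhs => rw [hd2]
        rw [Nat.mul_div_mul_left _ _ (by norm_num)]
    -- evaluate the reindexed sum
    have key2 : ∑ e ∈ m.divisors, ((moebius (2 * e) : ℤ) : ℚ) * ((q : ℚ) ^ (m / e) - 1)
        = - ∑ e ∈ m.divisors.filter (fun d => Odd d),
            ((moebius e : ℤ) : ℚ) * ((q : ℚ) ^ (m / e) - 1) := by
      rw [← Finset.sum_filter_add_sum_filter_not m.divisors (fun d => Odd d)]
      have h2 : ∑ e ∈ m.divisors.filter (fun d => ¬ Odd d),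
          ((moebius (2 * e) : ℤ) : ℚ) * ((q : ℚ) ^ (m / e) - 1) = 0 := by
        apply Finset.sum_eq_zero
        intro e he
        simp only [Finset.mem_filter, Nat.not_odd_iff_even] at he
        have : ¬ Squarefree (2 * e) := by
          intro hsq
          obtain ⟨f, hf⟩ := he.2
          have := hsq 2 (by exact ⟨f, by omega⟩)
          norm_num at this
        rw [moebius_eq_zero_of_not_squarefree this]
        simp
      have h1 : ∑ e ∈ m.divisors.filter (fun d => Odd d),
          ((moebius (2 * e) : ℤ) : ℚ) * ((q : ℚ) ^ (m / e) - 1)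
          = ∑ e ∈ m.divisors.filter (fun d => Odd d),
            (- ((moebius e : ℤ) : ℚ)) * ((q : ℚ) ^ (m / e) - 1) := by
        apply Finset.sum_congr rfl
        intro e he
        simp only [Finset.mem_filter] at he
        have hcop : Nat.Coprime 2 e := by
          rw [Nat.coprime_two_left]
          exact he.2
        rw [isMultiplicative_moebius.map_mul_of_coprime hcop, moebius_apply_prime Nat.prime_two]
        push_cast; ring
      rw [h1, h2]
      rw [← Finset.sum_neg_distrib]
      simp [neg_mul]
    rw [← hsplit, key, key2]
    rw [hncast]
    field_simp
    ring
  · intro hno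
    rw [odd_sum_eq q n hno]
    have hn0 : (n : ℚ) ≠ 0 := by positivity
    field_simp
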